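/- Let s, t ∈ S be distinct binary sequences, and let ord(g_s − g_t) denote the order of vanishing of the power series g_s − g_t ∈ ℂ⟦Y⟧. Then: if s_0 ≠ t_0 one has ord(g_s − g_t) = 2, while if s_0 = t_0 (so that σ(s) ≠ σ(t)) one has ord(g_s − g_t) = 4·ord(g_{σ(s)} − g_{σ(t)}) − 2. -/

import Mathlib

noncomputable section

/-- The space of binary sequences `{0,1}^ℕ`. -/
abbrev BinSeq := ℕ → Fin 2

/-- The left-shift map `σ`. -/
def shift (s : BinSeq) : BinSeq := fun n => s (n + 1)

/-- `a : S → ℕ → ℂ` satisfies the recursion defining the coefficients `aₙˢ`: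
`a₀ˢ = (−1)^{s₀}` and `a_{n+1}ˢ = −(1/(2a₀ˢ)) Σ_{i+j=n+1, i,j≥1} aᵢˢ aⱼˢ` if `4 ∤ n`,
with the extra term `−a_{n/4}^{σ(s)}/(2a₀ˢ)` if `4 ∣ n`. -/
def IsCoeffFamily (a : BinSeq → ℕ → ℂ) : Prop :=
  (∀ s : BinSeq, a s 0 = (-1 : ℂ) ^ (s 0 : ℕ)) ∧
  (∀ (s : BinSeq) (n : ℕ), a s (n + 1) =
    if 4 ∣ n then
      -(a (shift s) (n / 4)) / (2 * a s 0)
        - (∑ i ∈ Finset.Ico 1 (n + 1), a s i * a s (n + 1 - i)) / (2 * a s 0)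
    else
      -(∑ i ∈ Finset.Ico 1 (n + 1), a s i * a s (n + 1 - i)) / (2 * a s 0))

/-- The one-variable series `g_s = Σ_{n≥0} aₙˢ Y^(2+4n) ∈ ℂ⟦Y⟧`. -/
def gSer (a : BinSeq → ℕ → ℂ) (s : BinSeq) : PowerSeries ℂ :=
  PowerSeries.mk fun k => if k % 4 = 2 then a s ((k - 2) / 4) else 0

namespace Stmt11Aux

variable {a : BinSeq → ℕ → ℂ}

lemma a0_ne (ha : IsCoeffFamily a) (s : BinSeq) : a s 0 ≠ 0 := by
  rw [ha.1]; exact pow_ne_zero _ (by norm_num)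

lemma a0_ne_of_ne (ha : IsCoeffFamily a) {s t : BinSeq} (h : s 0 ≠ t 0) :
    a s 0 ≠ a t 0 := by
  rw [ha.1, ha.1]
  have hs := (s 0).isLt; have ht := (t 0).isLt
  have hne : (s 0 : ℕ) ≠ (t 0 : ℕ) := fun hc => h (Fin.ext hc)
  have : (s 0 : ℕ) = 0 ∧ (t 0 : ℕ) = 1 ∨ (s 0 : ℕ) = 1 ∧ (t 0 : ℕ) = 0 := by omega
  rcases this with ⟨h1, h2⟩ | ⟨h1, h2⟩ <;> rw [h1, h2] <;> norm_num

lemma eq_upto (ha : IsCoeffFamily a) {s t : BinSeq} (h0 : a s 0 = a t 0)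
    {k : ℕ} (hk : ∀ j < k, a (shift s) j = a (shift t) j) :
    ∀ n ≤ 4 * k, a s n = a t n := by
  intro n
  induction n using Nat.strong_induction_on with
  | _ n ih =>
    intro hn
    match n with
    | 0 => exact h0
    | m + 1 =>
      have hconv : ∑ i ∈ Finset.Ico 1 (m + 1), a s i * a s (m + 1 - i)
          = ∑ i ∈ Finset.Ico 1 (m + 1), a t i * a t (m + 1 - i) := by
        refine Finset.sum_congr rfl fun i hi => ?_
        simp only [Finset.mem_Ico] at hi
        rw [ih i (by omega) (by omega), ih (m + 1 - i) (by omega) (by omega)]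
      rw [ha.2 s m, ha.2 t m, h0, hconv]
      by_cases h4 : 4 ∣ m
      · rw [if_pos h4, if_pos h4, hk (m / 4) (by omega)]
      · rw [if_neg h4, if_neg h4]

lemma diff (ha : IsCoeffFamily a) {s t : BinSeq} (h0 : a s 0 = a t 0)
    {k : ℕ} (hk : ∀ j < k, a (shift s) j = a (shift t) j)
    (hne : a (shift s) k ≠ a (shift t) k) :
    a s (4 * k + 1) ≠ a t (4 * k + 1) := by
  have hconv : ∑ i ∈ Finset.Ico 1 (4 * k + 1), a s i * a s (4 * k + 1 - i)
      = ∑ i ∈ Finset.Ico 1 (4 * k + 1), a t i * a t (4 * k + 1 - i) := by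
    refine Finset.sum_congr rfl fun i hi => ?_
    simp only [Finset.mem_Ico] at hi
    rw [eq_upto ha h0 hk i (by omega), eq_upto ha h0 hk (4 * k + 1 - i) (by omega)]
  have key : a s (4 * k + 1) - a t (4 * k + 1)
      = -((a (shift s) k - a (shift t) k) / (2 * a t 0)) := by
    rw [ha.2 s (4 * k), ha.2 t (4 * k), if_pos ⟨k, rfl⟩, if_pos ⟨k, rfl⟩, h0, hconv,
      Nat.mul_div_cancel_left k (by norm_num : 0 < 4)]
    ring
  intro h
  rw [h, sub_self] at key
  have h2 : (2 : ℂ) * a t 0 ≠ 0 := mul_ne_zero two_ne_zero (a0_ne ha t)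
  exact hne (sub_eq_zero.mp (by
    field_simp [a0_ne ha t] at key
    linear_combination key))

lemma exists_ne (ha : IsCoeffFamily a) :
    ∀ N : ℕ, ∀ s t : BinSeq, s N ≠ t N → ∃ n, a s n ≠ a t n := by
  intro N
  induction N with
  | zero => exact fun s t h => ⟨0, a0_ne_of_ne ha h⟩
  | succ N ih =>
    intro s t h
    by_cases h0 : a s 0 = a t 0
    · have hσ : shift s N ≠ shift t N := h
      have hex : ∃ n, a (shift s) n ≠ a (shift t) n := ih _ _ hσ
      refine ⟨4 * Nat.find hex + 1,
        diff ha h0 (fun j hj => not_not.mp (Nat.find_min hex hj)) (Nat.find_spec hex)⟩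
    · exact ⟨0, h0⟩

lemma coeff_sub (s t : BinSeq) (i : ℕ) :
    (PowerSeries.coeff i) (gSer a s - gSer a t)
      = if i % 4 = 2 then a s ((i - 2) / 4) - a t ((i - 2) / 4) else 0 := by
  simp [gSer, PowerSeries.coeff_mk]
  split <;> simp

end Stmt11Aux

open Stmt11Aux

/-- For distinct `s, t ∈ S`: if `s₀ ≠ t₀` then `ord(g_s − g_t) = 2`, while if `s₀ = t₀`
(so that `σ(s) ≠ σ(t)`) then `ord(g_s − g_t) = 4·ord(g_{σ(s)} − g_{σ(t)}) − 2`. -/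
theorem stmt11 (a : BinSeq → ℕ → ℂ) (ha : IsCoeffFamily a) (s t : BinSeq) (hst : s ≠ t) :
    (s 0 ≠ t 0 → (gSer a s - gSer a t).order = 2) ∧
    (s 0 = t 0 →
      (gSer a s - gSer a t).order =
        4 * (gSer a (shift s) - gSer a (shift t)).order - 2) := by
  constructor
  · intro h0
    rw [show (2 : ℕ∞) = ((2 : ℕ) : ℕ∞) from rfl, PowerSeries.order_eq_nat]
    constructor
    · rw [coeff_sub]
      norm_num
      exact sub_ne_zero.mpr (a0_ne_of_ne ha h0)
    · intro i hi
      rw [coeff_sub]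
      have : i % 4 ≠ 2 := by omega
      simp [this]
  · intro h0
    have ha0 : a s 0 = a t 0 := by rw [ha.1, ha.1, h0]
    obtain ⟨N, hN⟩ : ∃ N, s (N + 1) ≠ t (N + 1) := by
      by_contra hc
      push_neg at hc
      exact hst (funext fun n => match n with
        | 0 => h0
        | m + 1 => hc m)
    have hex : ∃ n, a (shift s) n ≠ a (shift t) n := exists_ne ha N _ _ hN
    set k := Nat.find hex with hkdef
    have hmin : ∀ j < k, a (shift s) j = a (shift t) j :=
      fun j hj => not_not.mp (Nat.find_min hex hj)
    have hspec := Nat.find_spec hex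
    have ho1 : (gSer a (shift s) - gSer a (shift t)).order = ((2 + 4 * k : ℕ) : ℕ∞) := by
      rw [PowerSeries.order_eq_nat]
      constructor
      · rw [coeff_sub]
        have h1 : (2 + 4 * k) % 4 = 2 := by omega
        have h2 : (2 + 4 * k - 2) / 4 = k := by omega
        rw [if_pos h1, h2]
        exact sub_ne_zero.mpr hspec
      · intro i hi
        rw [coeff_sub]
        by_cases h1 : i % 4 = 2
        · rw [if_pos h1, hmin ((i - 2) / 4) (by omega), sub_self]
        · rw [if_neg h1]
    have ho2 : (gSer a s - gSer a t).order = ((16 * k + 6 : ℕ) : ℕ∞) := by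
      rw [PowerSeries.order_eq_nat]
      constructor
      · rw [coeff_sub]
        have h1 : (16 * k + 6) % 4 = 2 := by omega
        have h2 : (16 * k + 6 - 2) / 4 = 4 * k + 1 := by omega
        rw [if_pos h1, h2]
        exact sub_ne_zero.mpr (diff ha ha0 hmin hspec)
      · intro i hi
        rw [coeff_sub]
        by_cases h1 : i % 4 = 2
        · rw [if_pos h1, eq_upto ha ha0 hmin ((i - 2) / 4) (by omega), sub_self]
        · rw [if_neg h1]
    rw [ho1, ho2]
    rw [show (16 * k + 6 : ℕ) = 4 * (2 + 4 * k) - 2 from by omega]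
    push_cast
    ring_nf
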